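/- If a matching M in a graph G admits no augmenting path of length less than 2/ε, then |M| ≥ (1-ε)·μ(G), where μ(G) is the maximum matching size. -/

import Mathlib

open SimpleGraph

variable {V : Type*} [Fintype V] [DecidableEq V]

/-- `M` is a matching of `G`: a set of edges of `G` that pairwise do not share endpoints. -/
def IsMatching (G : SimpleGraph V) (M : Set (Sym2 V)) : Prop :=
  M ⊆ G.edgeSet ∧ ∀ v : V, ∀ e₁ ∈ M, ∀ e₂ ∈ M, v ∈ e₁ → v ∈ e₂ → e₁ = e₂

/-- A vertex is free if no matching edge covers it. -/
def IsFree (M : Set (Sym2 V)) (v : V) : Prop := ∀ e ∈ M, v ∉ e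

/-- An alternating path with respect to the matching `M`:
a (simple) path whose consecutive edges alternate membership in `M`. -/
def IsAltPath (M : Set (Sym2 V)) {G : SimpleGraph V} {a b : V} (p : G.Walk a b) : Prop :=
  p.IsPath ∧ List.Chain' (fun e₁ e₂ => (e₁ ∈ M ↔ e₂ ∉ M)) p.edges

/-- An augmenting path: an alternating path between two distinct free vertices,
starting and ending with non-matching edges. -/
def IsAugPath (M : Set (Sym2 V)) {G : SimpleGraph V} {a b : V} (p : G.Walk a b) : Prop :=
  IsAltPath M p ∧ IsFree M a ∧ IsFree M b ∧ a ≠ b ∧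
  (∀ e, p.edges.head? = some e → e ∉ M) ∧ (∀ e, p.edges.getLast? = some e → e ∉ M)

/-- μ(G): the maximum cardinality of a matching of `G`. -/
noncomputable def matchNum (G : SimpleGraph V) : ℕ :=
  sSup {n | ∃ M : Set (Sym2 V), IsMatching G M ∧ M.ncard = n}

set_option linter.unusedSectionVars false

namespace HK

variable {G : SimpleGraph V} {N N' : Set (Sym2 V)}

def AltL (A B : Set (Sym2 V)) : List (Sym2 V) → Prop
  | [] => True
  | e :: l => e ∈ A ∧ AltL B A l

def hSet (N N' : Set (Sym2 V)) (n : ℕ) : Set (Sym2 V) := if Even n then N \ N' else N' \ N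

lemma hSet_two (N N' : Set (Sym2 V)) (n : ℕ) : hSet N N' (n + 2) = hSet N N' n := by
  show hSet N N' (n + 1 + 1) = hSet N N' n
  simp [hSet, Nat.even_add_one, not_not]

lemma hSet_subset (n : ℕ) : hSet N N' n ⊆ (N \ N') ∪ (N' \ N) := by
  unfold hSet; split <;> intro e he <;> simp [he]

def AltP (N N' : Set (Sym2 V)) {a b : V} (q : G.Walk a b) : Prop :=
  AltL (hSet N N' q.length) (hSet N N' (q.length + 1)) q.edges

lemma altP_cons {x y b : V} (h : G.Adj x y) (q : G.Walk y b) :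
    AltP N N' (Walk.cons h q) ↔
      s(x, y) ∈ hSet N N' (q.length + 1) ∧ AltP N N' q := by
  unfold AltP
  rw [Walk.edges_cons, Walk.length_cons]
  show (s(x,y) ∈ hSet N N' (q.length + 1) ∧
      AltL (hSet N N' (q.length + 1 + 1)) (hSet N N' (q.length + 1)) q.edges) ↔ _
  rw [hSet_two]

/-- every edge of an alternating list is in the symmetric difference -/
lemma altL_mem {l : List (Sym2 V)} : ∀ {n : ℕ},
    AltL (hSet N N' n) (hSet N N' (n + 1)) l → ∀ e ∈ l, e ∈ (N \ N') ∪ (N' \ N) := by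
  induction l with
  | nil => intro n _ e he; simp at he
  | cons e l ih =>
    intro n ha f hf
    obtain ⟨h1, h2⟩ := ha
    rcases List.mem_cons.mp hf with hfe | hfl
    · exact hfe ▸ hSet_subset _ h1
    · have h2' : AltL (hSet N N' (n + 1)) (hSet N N' (n + 1 + 1)) l := by
        rwa [show hSet N N' (n + 1 + 1) = hSet N N' n from hSet_two N N' n]
      exact ih h2' f hfl

end HK

namespace HK2
open HK
variable {G : SimpleGraph V} {N N' : Set (Sym2 V)}

lemma hSet_cases {e : Sym2 V} {n : ℕ} (h : e ∈ hSet N N' n) :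
    (Even n ∧ e ∈ N \ N') ∨ (¬ Even n ∧ e ∈ N' \ N) := by
  by_cases hn : Even n <;> simp [hSet, hn] at h <;> tauto

lemma hSet_even {n : ℕ} (hn : Even n) : hSet N N' n = N \ N' := by simp [hSet, hn]
lemma hSet_odd {n : ℕ} (hn : ¬ Even n) : hSet N N' n = N' \ N := by simp [hSet, hn]

lemma altL_tail {e : Sym2 V} {l : List (Sym2 V)} {n : ℕ}
    (h : AltL (hSet N N' (n+1)) (hSet N N' (n+1+1)) (e :: l)) :
    e ∈ hSet N N' (n+1) ∧ AltL (hSet N N' n) (hSet N N' (n+1)) l := by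
  obtain ⟨h1, h2⟩ := h
  exact ⟨h1, by rwa [show hSet N N' (n+1+1) = hSet N N' n from hSet_two N N' n] at h2⟩

lemma altL_chain {W : Set (Sym2 V)} (hDW : ∀ e ∈ N \ N', e ∈ W) (hD'W : ∀ e ∈ N' \ N, e ∉ W) :
    ∀ (l : List (Sym2 V)) (n : ℕ), AltL (hSet N N' n) (hSet N N' (n+1)) l →
    List.Chain' (fun e₁ e₂ => e₁ ∈ W ↔ e₂ ∉ W) l := by
  intro l
  induction l with
  | nil => intro n _; exact List.isChain_nil
  | cons e l ih =>
    intro n ha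
    obtain ⟨h1, h2⟩ := ha
    have h2' : AltL (hSet N N' (n + 1)) (hSet N N' (n + 1 + 1)) l := by
      rwa [show hSet N N' (n + 1 + 1) = hSet N N' n from hSet_two N N' n]
    apply List.isChain_cons.mpr
    refine ⟨?_, ih (n+1) h2'⟩
    intro y hy
    cases l with
    | nil => simp at hy
    | cons e' l' =>
      simp only [List.head?_cons, Option.mem_def, Option.some_inj] at hy
      subst hy
      have h1' : e' ∈ hSet N N' (n+1) := h2'.1
      rcases hSet_cases h1 with ⟨hn, he⟩ | ⟨hn, he⟩
      · have hn' : ¬ Even (n+1) := by simp [Nat.even_add_one, hn]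
        rcases hSet_cases h1' with ⟨c, _⟩ | ⟨_, he'⟩
        · exact absurd c hn'
        · exact iff_of_true (hDW _ he) (hD'W _ he')
      · have hn' : Even (n+1) := by simp [Nat.even_add_one, hn]
        rcases hSet_cases h1' with ⟨_, he'⟩ | ⟨c, _⟩
        · exact iff_of_false (hD'W _ he) (fun hc => hc (hDW _ he'))
        · exact absurd hn' c

lemma altL_getLast : ∀ (l : List (Sym2 V)) (n : ℕ),
    AltL (hSet N N' n) (hSet N N' (n+1)) l → l.length = n →
    ∀ f, l.getLast? = some f → f ∈ N' \ N := by
  intro l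
  induction l with
  | nil => intro n _ _ f hf; simp at hf
  | cons e l ih =>
    intro n ha hlen f hf
    cases l with
    | nil =>
      simp only [List.getLast?_singleton, Option.some_inj] at hf
      subst hf
      simp only [List.length_cons, List.length_nil, Nat.zero_add] at hlen
      subst hlen
      rcases hSet_cases ha.1 with ⟨c, _⟩ | ⟨_, he⟩
      · exact absurd c (by simp)
      · exact he
    | cons e' l' =>
      have hlen' : (e' :: l').length = n - 1 := by simp at hlen ⊢; omega
      have hn : n = (n - 1) + 1 := by simp at hlen; omega
      rw [hn] at ha
      obtain ⟨_, h2⟩ := altL_tail ha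
      rw [List.getLast?_cons_cons] at hf
      exact ih (n-1) h2 hlen' f hf

lemma altL_count : ∀ (l : List (Sym2 V)) (n : ℕ), l.Nodup →
    AltL (hSet N N' n) (hSet N N' (n+1)) l → l.length = n →
    {e | e ∈ l ∧ e ∈ N}.ncard = n / 2 ∧ {e | e ∈ l ∧ e ∈ N'}.ncard = (n + 1) / 2 := by
  intro l
  induction l with
  | nil =>
    intro n _ _ hlen
    simp only [List.length_nil] at hlen; subst hlen
    simp [Set.ncard_empty]
  | cons e l ih =>
    intro n hnd ha hlen
    have hm : l.length = n - 1 := by simp at hlen; omega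
    have hn : n = (n - 1) + 1 := by simp at hlen; omega
    set m := n - 1 with hmdef
    rw [hn] at ha
    obtain ⟨h1, h2⟩ := altL_tail ha
    have hel : e ∉ l := (List.nodup_cons.mp hnd).1
    obtain ⟨hcN, hcN'⟩ := ih m (List.nodup_cons.mp hnd).2 h2 hm
    rcases hSet_cases h1 with ⟨hpar, he, he'⟩ | ⟨hpar, he, he'⟩
    · -- e ∈ N \ N', Even (m+1)
      have hSN : {x | x ∈ e :: l ∧ x ∈ N} = insert e {x | x ∈ l ∧ x ∈ N} := by
        ext x; simp only [List.mem_cons, Set.mem_setOf_eq, Set.mem_insert_iff]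
        constructor
        · rintro ⟨hx | hx, hxN⟩
          · exact Or.inl hx
          · exact Or.inr ⟨hx, hxN⟩
        · rintro (rfl | ⟨hx, hxN⟩)
          · exact ⟨Or.inl rfl, he⟩
          · exact ⟨Or.inr hx, hxN⟩
      have hSN' : {x | x ∈ e :: l ∧ x ∈ N'} = {x | x ∈ l ∧ x ∈ N'} := by
        ext x; simp only [List.mem_cons, Set.mem_setOf_eq]
        constructor
        · rintro ⟨hx | hx, hxN⟩
          · exact absurd (hx ▸ hxN) he'
          · exact ⟨hx, hxN⟩
        · rintro ⟨hx, hxN⟩; exact ⟨Or.inr hx, hxN⟩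
      have hnotmem : e ∉ {x | x ∈ l ∧ x ∈ N} := fun hc => hel hc.1
      rw [hSN, hSN', Set.ncard_insert_of_notMem hnotmem, hcN, hcN']
      obtain ⟨t, ht⟩ := hpar
      constructor <;> omega
    · -- e ∈ N' \ N, ¬ Even (m+1)
      have hSN : {x | x ∈ e :: l ∧ x ∈ N} = {x | x ∈ l ∧ x ∈ N} := by
        ext x; simp only [List.mem_cons, Set.mem_setOf_eq]
        constructor
        · rintro ⟨hx | hx, hxN⟩
          · exact absurd (hx ▸ hxN) he'
          · exact ⟨hx, hxN⟩
        · rintro ⟨hx, hxN⟩; exact ⟨Or.inr hx, hxN⟩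
      have hSN' : {x | x ∈ e :: l ∧ x ∈ N'} = insert e {x | x ∈ l ∧ x ∈ N'} := by
        ext x; simp only [List.mem_cons, Set.mem_setOf_eq, Set.mem_insert_iff]
        constructor
        · rintro ⟨hx | hx, hxN⟩
          · exact Or.inl hx
          · exact Or.inr ⟨hx, hxN⟩
        · rintro (rfl | ⟨hx, hxN⟩)
          · exact ⟨Or.inl rfl, he⟩
          · exact ⟨Or.inr hx, hxN⟩
      have hnotmem : e ∉ {x | x ∈ l ∧ x ∈ N'} := fun hc => hel hc.1
      rw [hSN, hSN', Set.ncard_insert_of_notMem hnotmem, hcN, hcN']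
      have hpar2 : Even m := by
        rcases Nat.even_or_odd m with hh | hh
        · exact hh
        · exact absurd (by obtain ⟨t, ht⟩ := hh; exact ⟨t+1, by omega⟩) hpar
      obtain ⟨t, ht⟩ := hpar2
      constructor <;> omega

end HK2

namespace HK3
open HK HK2
variable {G : SimpleGraph V} {N N' : Set (Sym2 V)}

lemma head_edge_of_mem {x b : V} {q : G.Walk x b} (hp : q.IsPath) {f : Sym2 V}
    (hf : f ∈ q.edges) (hx : x ∈ f) :
    ∃ (y : V) (h : G.Adj x y) (q' : G.Walk y b), q = Walk.cons h q' ∧ f = s(x, y) := by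
  cases q with
  | nil => simp at hf
  | cons h q' =>
    rw [Walk.edges_cons] at hf
    rcases List.mem_cons.mp hf with hfe | hfl
    · exact ⟨_, h, q', rfl, hfe⟩
    · exfalso
      obtain ⟨w, rfl⟩ := Sym2.mem_iff_exists.mp hx
      have hxs : x ∈ q'.support := q'.fst_mem_support_of_mem_edges hfl
      exact (Walk.cons_isPath_iff h q').mp hp |>.2 hxs

lemma exists_Dp_edge : ∀ {x v0 : V} (q : G.Walk x v0), AltP N N' q →
    ∀ v ∈ q.support, v ≠ x → ∃ f ∈ q.edges, v ∈ f ∧ f ∈ N' \ N := by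
  intro x v0 q
  induction q with
  | nil =>
    intro _ v hv hvx
    rw [Walk.support_nil] at hv
    simp at hv
    exact absurd hv hvx
  | @cons u y w hadj q' ih =>
    intro ha v hv hvx
    obtain ⟨h1, ha'⟩ := (altP_cons hadj q').mp ha
    rw [Walk.support_cons] at hv
    rcases List.mem_cons.mp hv with rfl | hv'
    · exact absurd rfl hvx
    · by_cases hvy : v = y
      · subst hvy
        rcases hSet_cases h1 with ⟨hpar, hmem⟩ | ⟨hpar, hmem⟩
        · -- head edge in N \ N' ; the next edge (in q') is in N' \ N
          cases q' with
          | nil => simp at hpar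
          | @cons y y2 w hadj2 q'' =>
            obtain ⟨h1', _⟩ := (altP_cons hadj2 q'').mp ha'
            have hpar' : ¬ Even (q''.length + 1) := by
              rw [Walk.length_cons] at hpar
              simp [Nat.even_add_one] at hpar ⊢
              simpa [Nat.even_add_one] using hpar
            rw [hSet_odd hpar'] at h1'
            exact ⟨s(v, y2), by simp [Walk.edges_cons], Sym2.mem_mk_left _ _, h1'⟩
        · exact ⟨s(u, v), by simp [Walk.edges_cons], Sym2.mem_mk_right _ _, hmem⟩
      · obtain ⟨f, hfe, hvf, hfm⟩ := ih ha' v hv' hvy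
        exact ⟨f, by simp [Walk.edges_cons, hfe], hvf, hfm⟩

lemma exists_D_edge : ∀ {x v0 : V} (q : G.Walk x v0), AltP N N' q →
    ∀ v ∈ q.support, v ≠ x → (∃ f ∈ q.edges, v ∈ f ∧ f ∈ N \ N') ∨ v = v0 := by
  intro x v0 q
  induction q with
  | nil =>
    intro _ v hv hvx
    rw [Walk.support_nil] at hv
    simp at hv
    exact absurd hv hvx
  | @cons u y w hadj q' ih =>
    intro ha v hv hvx
    obtain ⟨h1, ha'⟩ := (altP_cons hadj q').mp ha
    rw [Walk.support_cons] at hv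
    rcases List.mem_cons.mp hv with rfl | hv'
    · exact absurd rfl hvx
    · by_cases hvy : v = y
      · subst hvy
        rcases hSet_cases h1 with ⟨hpar, hmem⟩ | ⟨hpar, hmem⟩
        · exact Or.inl ⟨s(u, v), by simp [Walk.edges_cons], Sym2.mem_mk_right _ _, hmem⟩
        · cases q' with
          | nil => exact Or.inr rfl
          | @cons y y2 w hadj2 q'' =>
            obtain ⟨h1', _⟩ := (altP_cons hadj2 q'').mp ha'
            have hpar' : Even (q''.length + 1) := by
              rw [Walk.length_cons] at hpar
              simp [Nat.even_add_one] at hpar ⊢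
              simpa [Nat.even_add_one] using hpar
            rw [hSet_even hpar'] at h1'
            exact Or.inl ⟨s(v, y2), by simp [Walk.edges_cons], Sym2.mem_mk_left _ _, h1'⟩
      · rcases ih ha' v hv' hvy with ⟨f, hfe, hvf, hfm⟩ | rfl
        · exact Or.inl ⟨f, by simp [Walk.edges_cons, hfe], hvf, hfm⟩
        · exact Or.inr rfl

end HK3

namespace HK4
open HK HK2 HK3
variable {G : SimpleGraph V} {N N' : Set (Sym2 V)}

lemma head_edge_type {x v0 : V} {q : G.Walk x v0} (ha : AltP N N' q) {f : Sym2 V}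
    (hp : q.IsPath) (hf : f ∈ q.edges) (hx : x ∈ f) : f ∈ hSet N N' q.length := by
  obtain ⟨y1, hadj1, q', rfl, rfl⟩ := head_edge_of_mem hp hf hx
  obtain ⟨h1, _⟩ := (altP_cons hadj1 q').mp ha
  rwa [Walk.length_cons]

lemma no_revisit (hN : IsMatching G N) (hN' : IsMatching G N') {x v0 y : V}
    {q : G.Walk x v0} (hp : q.IsPath) (ha : AltP N N' q) (hl : 0 < q.length)
    (hfree : IsFree N v0) (hadj : G.Adj y x) (hf : s(y, x) ∈ hSet N N' (q.length + 1)) :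
    y ∉ q.support := by
  intro hy
  have hyx : y ≠ x := hadj.ne
  rcases hSet_cases hf with ⟨hpar, hmem⟩ | ⟨hpar, hmem⟩
  · -- s(y,x) ∈ N \ N'
    rcases exists_D_edge q ha y hy hyx with ⟨f, hfe, hyf, hfD⟩ | rfl
    · have hfeq : f = s(y, x) := hN.2 y f hfD.1 _ hmem.1 hyf (Sym2.mem_mk_left _ _)
      subst hfeq
      have htype := head_edge_type ha hp hfe (Sym2.mem_mk_right _ _)
      have hparl : ¬ Even q.length := by simpa [Nat.even_add_one] using hpar
      rw [hSet_odd hparl] at htype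
      exact htype.2 hmem.1
    · exact hfree _ hmem.1 (Sym2.mem_mk_left _ _)
  · -- s(y,x) ∈ N' \ N
    obtain ⟨f, hfe, hyf, hfD⟩ := exists_Dp_edge q ha y hy hyx
    have hfeq : f = s(y, x) := hN'.2 y f hfD.1 _ hmem.1 hyf (Sym2.mem_mk_left _ _)
    subst hfeq
    have htype := head_edge_type ha hp hfe (Sym2.mem_mk_right _ _)
    have hparl : Even q.length := by simpa [Nat.even_add_one] using hpar
    rw [hSet_even hparl] at htype
    exact htype.2 hmem.1

def MaxWalk (N N' : Set (Sym2 V)) {x v0 : V} (q : G.Walk x v0) : Prop :=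
  q.IsPath ∧ AltP N N' q ∧ 0 < q.length ∧ IsFree N v0 ∧
    ∀ f ∈ hSet N N' (q.length + 1), x ∉ f

lemma exists_maxwalk (hN : IsMatching G N) (hN' : IsMatching G N') {v0 : V}
    (hfree : IsFree N v0) (hcov : ∃ e ∈ N', v0 ∈ e) :
    ∃ (x : V) (q : G.Walk x v0), MaxWalk N N' q := by
  obtain ⟨e, heN', hv0e⟩ := hcov
  obtain ⟨w, rfl⟩ := Sym2.mem_iff_exists.mp hv0e
  have hadj : G.Adj v0 w := (SimpleGraph.mem_edgeSet G).mp (hN'.1 heN')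
  set S : Set ℕ :=
    {n | ∃ (x : V) (q : G.Walk x v0), (q.IsPath ∧ AltP N N' q ∧ 0 < q.length) ∧ q.length = n}
    with hS
  have hne : 1 ∈ S := by
    refine ⟨w, Walk.cons hadj.symm Walk.nil, ⟨?_, ?_, by simp⟩, by simp⟩
    · rw [Walk.cons_isPath_iff]
      exact ⟨Walk.IsPath.nil, by simp [hadj.ne']⟩
    · show AltL (hSet N N' 1) (hSet N N' 2) [s(w, v0)]
      refine ⟨?_, trivial⟩
      rw [hSet_odd (by simp)]
      have : s(w, v0) = s(v0, w) := Sym2.eq_swap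
      rw [this]
      exact ⟨heN', fun hc => hfree _ hc (Sym2.mem_mk_left _ _)⟩
  have hbdd : BddAbove S := by
    refine ⟨Fintype.card V, ?_⟩
    rintro n ⟨x, q, ⟨hp, _, _⟩, rfl⟩
    exact hp.length_lt.le
  obtain ⟨x, q, ⟨hp, ha, hl⟩, hlen⟩ := Nat.sSup_mem ⟨1, hne⟩ hbdd
  refine ⟨x, q, hp, ha, hl, hfree, ?_⟩
  intro f hfmem hxf
  obtain ⟨y, rfl⟩ := Sym2.mem_iff_exists.mp hxf
  have hedge : s(x, y) ∈ G.edgeSet := by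
    rcases hSet_subset _ hfmem with hh | hh
    · exact hN.1 hh.1
    · exact hN'.1 hh.1
  have hadj2 : G.Adj x y := (SimpleGraph.mem_edgeSet G).mp hedge
  have hf' : s(y, x) ∈ hSet N N' (q.length + 1) := by
    rwa [Sym2.eq_swap] at hfmem
  have hnm : y ∉ q.support := no_revisit hN hN' hp ha hl hfree hadj2.symm hf'
  have hmem2 : q.length + 1 ∈ S := by
    refine ⟨y, Walk.cons hadj2.symm q, ⟨?_, ?_, by simp⟩, by simp⟩
    · rw [Walk.cons_isPath_iff]; exact ⟨hp, hnm⟩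
    · exact (altP_cons hadj2.symm q).mpr ⟨hf', ha⟩
  have := le_csSup hbdd hmem2
  omega

lemma maxwalk_head_free_of_odd (hN : IsMatching G N) (hN' : IsMatching G N')
    {x v0 : V} {q : G.Walk x v0} (hw : MaxWalk N N' q) (hodd : ¬ Even q.length) :
    IsFree N x := by
  obtain ⟨hp, ha, hl, hfree, hmax⟩ := hw
  intro f hfN hxf
  cases q with
  | nil => simp at hl
  | @cons _ y1 _ hadj1 q' =>
    obtain ⟨h1, _⟩ := (altP_cons hadj1 q').mp ha
    have h1' : s(x, y1) ∈ N' \ N := by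
      rwa [show hSet N N' (q'.length + 1) = hSet N N' (Walk.cons hadj1 q').length by
        rw [Walk.length_cons], hSet_odd hodd] at h1
    by_cases hfN' : f ∈ N'
    · have : f = s(x, y1) := hN'.2 x f hfN' _ h1'.1 hxf (Sym2.mem_mk_left _ _)
      exact h1'.2 (this ▸ hfN)
    · have hfD : f ∈ hSet N N' ((Walk.cons hadj1 q').length + 1) := by
        rw [hSet_even (by simpa [Nat.even_add_one] using hodd)]
        exact ⟨hfN, hfN'⟩
      exact hmax f hfD hxf

lemma maxwalk_even_end (hN : IsMatching G N) (hN' : IsMatching G N')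
    {x v0 : V} {q : G.Walk x v0} (hw : MaxWalk N N' q) (heven : Even q.length) :
    (∃ e ∈ N, x ∈ e) ∧ IsFree N' x := by
  obtain ⟨hp, ha, hl, hfree, hmax⟩ := hw
  cases q with
  | nil => simp at hl
  | @cons _ y1 _ hadj1 q' =>
    obtain ⟨h1, _⟩ := (altP_cons hadj1 q').mp ha
    have h1' : s(x, y1) ∈ N \ N' := by
      rwa [show hSet N N' (q'.length + 1) = hSet N N' (Walk.cons hadj1 q').length by
        rw [Walk.length_cons], hSet_even heven] at h1
    refine ⟨⟨s(x, y1), h1'.1, Sym2.mem_mk_left _ _⟩, ?_⟩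
    intro f hfN' hxf
    by_cases hfN : f ∈ N
    · have : f = s(x, y1) := hN.2 x f hfN _ h1'.1 hxf (Sym2.mem_mk_left _ _)
      exact h1'.2 (this ▸ hfN')
    · have hfD : f ∈ hSet N N' ((Walk.cons hadj1 q').length + 1) := by
        rw [hSet_odd (by simpa [Nat.even_add_one] using heven)]
        exact ⟨hfN', hfN⟩
      exact hmax f hfD hxf

lemma cp_N (hN : IsMatching G N) (hN' : IsMatching G N')
    {x v0 : V} {q : G.Walk x v0} (hw : MaxWalk N N' q) (hxfree : IsFree N x) :
    ∀ f ∈ N, ∀ v ∈ q.support, v ∈ f → f ∈ q.edges := by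
  intro f hf v hv hvf
  by_cases hvx : v = x
  · exact absurd (hvx ▸ hvf) (hxfree f hf)
  · rcases exists_D_edge q hw.2.1 v hv hvx with ⟨g, hge, hvg, hgD⟩ | rfl
    · have : f = g := hN.2 v f hf g hgD.1 hvf hvg
      exact this ▸ hge
    · exact absurd hvf (hw.2.2.2.1 f hf)

lemma cp_N' (hN : IsMatching G N) (hN' : IsMatching G N')
    {x v0 : V} {q : G.Walk x v0} (hw : MaxWalk N N' q) (hodd : ¬ Even q.length) :
    ∀ f ∈ N', ∀ v ∈ q.support, v ∈ f → f ∈ q.edges := by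
  intro f hf v hv hvf
  by_cases hvx : v = x
  · subst hvx
    obtain ⟨hp, ha, hl, hfree, hmax⟩ := hw
    cases q with
    | nil => simp at hl
    | @cons _ y1 _ hadj1 q' =>
      obtain ⟨h1, _⟩ := (altP_cons hadj1 q').mp ha
      have h1' : s(v, y1) ∈ N' \ N := by
        rwa [show hSet N N' (q'.length + 1) = hSet N N' (Walk.cons hadj1 q').length by
          rw [Walk.length_cons], hSet_odd hodd] at h1
      have : f = s(v, y1) := hN'.2 v f hf _ h1'.1 hvf (Sym2.mem_mk_left _ _)
      rw [this, Walk.edges_cons]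
      exact List.mem_cons_self
  · obtain ⟨g, hge, hvg, hgD⟩ := exists_Dp_edge q hw.2.1 v hv hvx
    have : f = g := hN'.2 v f hf g hgD.1 hvf hvg
    exact this ▸ hge

end HK4

namespace HK5
open HK HK2 HK3 HK4
variable {G : SimpleGraph V} {N N' : Set (Sym2 V)}

theorem det {w u1 u2 : V} (q1 : G.Walk w u1) (q2 : G.Walk w u2) (A B : Set (Sym2 V))
    (hA : ∀ v : V, ∀ e₁ ∈ A, ∀ e₂ ∈ A, v ∈ e₁ → v ∈ e₂ → e₁ = e₂)
    (hB : ∀ v : V, ∀ e₁ ∈ B, ∀ e₂ ∈ B, v ∈ e₁ → v ∈ e₂ → e₁ = e₂)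
    (ha1 : AltL A B q1.edges) (ha2 : AltL A B q2.edges)
    (t1 : ∀ f ∈ (if Even q1.length then A else B), u1 ∉ f)
    (t2 : ∀ f ∈ (if Even q2.length then A else B), u2 ∉ f) : u1 = u2 :=
  match u1, u2, q1, q2, ha1, ha2, t1, t2 with
  | _, _, .nil, .nil, _, _, _, _ => rfl
  | _, _, .nil, .cons (v := y2) h2 q2', _, ha2, t1, _ => by
      exact absurd (Sym2.mem_mk_left w y2)
        (t1 s(w, y2) (by simp only [Walk.length_nil]; simpa using ha2.1))
  | _, _, .cons (v := y1) h1 q1', .nil, ha1, _, _, t2 => by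
      exact absurd (Sym2.mem_mk_left w y1)
        (t2 s(w, y1) (by simp only [Walk.length_nil]; simpa using ha1.1))
  | _, _, .cons (v := y1) h1 q1', .cons (v := y2) h2 q2', ha1, ha2, t1, t2 => by
      have ha1' : s(w, y1) ∈ A := ha1.1
      have ha2' : s(w, y2) ∈ A := ha2.1
      have he : s(w, y1) = s(w, y2) :=
        hA w _ ha1' _ ha2' (Sym2.mem_mk_left _ _) (Sym2.mem_mk_left _ _)
      have hy : y1 = y2 := by
        rcases Sym2.eq_iff.mp he with ⟨_, h⟩ | ⟨hh1, hh2⟩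
        · exact h
        · exact hh2.trans hh1
      subst hy
      refine det q1' q2' B A hB hA ha1.2 ha2.2 ?_ ?_
      · intro f hf
        apply t1 f
        rw [Walk.length_cons]
        by_cases hpar : Even q1'.length
        · simpa [hpar, Nat.even_add_one] using hf
        · simpa [hpar, Nat.even_add_one] using hf
      · intro f hf
        apply t2 f
        rw [Walk.length_cons]
        by_cases hpar : Even q2'.length
        · simpa [hpar, Nat.even_add_one] using hf
        · simpa [hpar, Nat.even_add_one] using hf

def covered (S : Set (Sym2 V)) : Set V := {v | ∃ e ∈ S, v ∈ e}

lemma covered_ncard {G : SimpleGraph V} :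
    ∀ (S : Set (Sym2 V)), IsMatching G S → (covered S).ncard = 2 * S.ncard := by
  intro S
  refine Set.Finite.induction_on
    (motive := fun T _ => IsMatching G T → (covered T).ncard = 2 * T.ncard)
    S (Set.toFinite S) (by intro _; simp [covered]) ?_
  intro a s ha hfin ih hm
  · 
    have hm' : IsMatching G s :=
      ⟨fun e he => hm.1 (Set.mem_insert_of_mem _ he),
       fun v e1 he1 e2 he2 => hm.2 v e1 (Set.mem_insert_of_mem _ he1) e2
         (Set.mem_insert_of_mem _ he2)⟩
    have hcov : covered (insert a s) = {v | v ∈ a} ∪ covered s := by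
      ext v
      simp only [covered, Set.mem_setOf_eq, Set.mem_union, Set.mem_insert_iff]
      constructor
      · rintro ⟨e, rfl | he, hv⟩
        · exact Or.inl hv
        · exact Or.inr ⟨e, he, hv⟩
      · rintro (hv | ⟨e, he, hv⟩)
        · exact ⟨a, Or.inl rfl, hv⟩
        · exact ⟨e, Or.inr he, hv⟩
    have hdisj : Disjoint {v | v ∈ a} (covered s) := by
      rw [Set.disjoint_left]
      rintro v hva ⟨e, he, hve⟩
      have : a = e := hm.2 v a (Set.mem_insert _ _) e (Set.mem_insert_of_mem _ he) hva hve
      exact ha (this ▸ he)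
    have hpair : ({v | v ∈ a} : Set V).ncard = 2 := by
      induction a using Sym2.ind with
      | _ p r =>
        have hne : p ≠ r := by
          have : s(p, r) ∈ G.edgeSet := hm.1 (Set.mem_insert _ _)
          exact ((SimpleGraph.mem_edgeSet G).mp this).ne
        have : {v | v ∈ s(p, r)} = ({p, r} : Set V) := by
          ext v; simp [Sym2.mem_iff]
        rw [this, Set.ncard_pair hne]
    rw [hcov, Set.ncard_union_eq hdisj, hpair, ih hm',
      Set.ncard_insert_of_notMem ha]
    ring
end HK5

namespace HK6
open HK HK2 HK3 HK4 HK5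
variable {G : SimpleGraph V} {M M' N N' : Set (Sym2 V)}

lemma mem_support_of_edge {a b w : V} {q : G.Walk a b} {e : Sym2 V}
    (he : e ∈ q.edges) (hw : w ∈ e) : w ∈ q.support := by
  obtain ⟨u, rfl⟩ := Sym2.mem_iff_exists.mp hw
  exact q.fst_mem_support_of_mem_edges he

lemma det_ends (hN : IsMatching G N) (hN' : IsMatching G N') {w v1 v2 : V}
    (q1 : G.Walk w v1) (q2 : G.Walk w v2) (hw1 : MaxWalk N N' q1) (hw2 : MaxWalk N N' q2)
    (he1 : Even q1.length) (he2 : Even q2.length) : v1 = v2 := by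
  apply det q1 q2 (N \ N') (N' \ N)
  · intro v e1 h1 e2 h2 m1 m2; exact hN.2 v e1 h1.1 e2 h2.1 m1 m2
  · intro v e1 h1 e2 h2 m1 m2; exact hN'.2 v e1 h1.1 e2 h2.1 m1 m2
  · have := hw1.2.1
    unfold AltP at this
    rwa [hSet_even he1, hSet_odd (by simp [Nat.even_add_one, he1])] at this
  · have := hw2.2.1
    unfold AltP at this
    rwa [hSet_even he2, hSet_odd (by simp [Nat.even_add_one, he2])] at this
  · intro f hf
    rw [if_pos he1] at hf
    exact fun hc => hw1.2.2.2.1 f hf.1 hc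
  · intro f hf
    rw [if_pos he2] at hf
    exact fun hc => hw2.2.2.2.1 f hf.1 hc

def off (S : Set (Sym2 V)) (R : Set V) : Set (Sym2 V) := {e ∈ S | ∀ v ∈ R, v ∉ e}

def Closed (S : Set (Sym2 V)) (R : Set V) : Prop :=
  ∀ e ∈ S, ∀ v ∈ R, v ∈ e → ∀ w ∈ e, w ∈ R

lemma off_matching (hM : IsMatching G M) (R : Set V) : IsMatching G (off M R) :=
  ⟨fun e he => hM.1 he.1, fun v e1 he1 e2 he2 => hM.2 v e1 he1.1 e2 he2.1⟩

lemma no_aug_le (hN : IsMatching G N) (hN' : IsMatching G N')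
    (hex : ¬ ∃ (x v0 : V) (q : G.Walk x v0), MaxWalk N N' q ∧ ¬ Even q.length) :
    N'.ncard ≤ N.ncard := by
  classical
  have hcov' := covered_ncard (G := G) N' hN'
  have hcov := covered_ncard (G := G) N hN
  set onlyN' := covered N' \ covered N with honly'
  set onlyN := covered N \ covered N' with honly
  have key : ∀ v ∈ onlyN', ∃ x : V, x ∈ onlyN ∧
      ∃ q : G.Walk x v, MaxWalk N N' q ∧ Even q.length := by
    intro v hv
    have hvfree : IsFree N v := fun e he hve => hv.2 ⟨e, he, hve⟩
    obtain ⟨x, q, hw⟩ := exists_maxwalk hN hN' hvfree hv.1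
    have heven : Even q.length := by
      by_contra hodd; exact hex ⟨x, v, q, hw, hodd⟩
    obtain ⟨hxcov, hxfree'⟩ := maxwalk_even_end hN hN' hw heven
    refine ⟨x, ⟨hxcov, fun hc => ?_⟩, q, hw, heven⟩
    obtain ⟨e, he, hxe⟩ := hc
    exact hxfree' e he hxe
  choose Φ hΦmem qq hqw hqe using key
  set F : V → V := fun v => if hv : v ∈ onlyN' then Φ v hv else v with hF
  have hinj : Set.InjOn F onlyN' := by
    intro v1 h1 v2 h2 heq
    have heq' : Φ v1 h1 = Φ v2 h2 := by
      simpa [hF, dif_pos h1, dif_pos h2] using heq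
    obtain ⟨q2, hw2, he2⟩ : ∃ q : G.Walk (Φ v1 h1) v2, MaxWalk N N' q ∧ Even q.length := by
      rw [heq']; exact ⟨qq v2 h2, hqw v2 h2, hqe v2 h2⟩
    exact det_ends hN hN' (qq v1 h1) q2 (hqw v1 h1) hw2 (hqe v1 h1) he2
  have himg : F '' onlyN' ⊆ onlyN := by
    rintro _ ⟨v, hv, rfl⟩
    have : F v = Φ v hv := by simp [hF, dif_pos hv]
    rw [this]
    exact hΦmem v hv
  have h1 : onlyN'.ncard = (F '' onlyN').ncard := (Set.ncard_image_of_injOn hinj).symm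
  have h2 : (F '' onlyN').ncard ≤ onlyN.ncard := Set.ncard_le_ncard himg (Set.toFinite _)
  have e1 : (covered N' ∩ covered N).ncard + (covered N' \ covered N).ncard
      = (covered N' : Set V).ncard := Set.ncard_inter_add_ncard_diff_eq_ncard _ _
  have e2 : (covered N ∩ covered N').ncard + (covered N \ covered N').ncard
      = (covered N : Set V).ncard := Set.ncard_inter_add_ncard_diff_eq_ncard _ _
  rw [← honly'] at e1
  rw [← honly] at e2
  rw [Set.inter_comm] at e2
  omega

end HK6

namespace HK7
open HK HK2 HK3 HK4 HK5 HK6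
variable {G : SimpleGraph V} {M M' : Set (Sym2 V)}

lemma outer (hM : IsMatching G M) (hM' : IsMatching G M') {ε : ℝ} (hε : 0 < ε)
    (h : ∀ (a b : V) (p : G.Walk a b), IsAugPath M p → ¬ ((p.length : ℝ) < 2 / ε)) :
    ∀ (n : ℕ) (R : Set V), Closed M R → Closed M' R → (off M' R).ncard = n →
    ∃ d : ℕ, (off M' R).ncard ≤ (off M R).ncard + d ∧
      (d : ℝ) * (2 / ε - 1) ≤ 2 * ((off M R).ncard : ℝ) := by
  intro n
  induction n using Nat.strong_induction_on with
  | _ n ih =>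
  intro R hcR hcR' hn
  set N := off M R with hNdef
  set N' := off M' R with hN'def
  have hNm : IsMatching G N := off_matching hM R
  have hN'm : IsMatching G N' := off_matching hM' R
  by_cases hex : ∃ (x v0 : V) (q : G.Walk x v0), MaxWalk N N' q ∧ ¬ Even q.length
  · obtain ⟨x, v0, q, hw, hodd⟩ := hex
    have hxfree : IsFree N x := maxwalk_head_free_of_odd hNm hN'm hw hodd
    obtain ⟨hp, ha, hl, hfreev0, hmax⟩ := hw
    have haL : AltL (hSet N N' q.length) (hSet N N' (q.length + 1)) q.edges := ha
    have hedges : ∀ e ∈ q.edges, e ∈ (N \ N') ∪ (N' \ N) := altL_mem haL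
    have havoid : ∀ e ∈ q.edges, ∀ v ∈ R, v ∉ e := by
      intro e he
      rcases hedges e he with hh | hh
      · exact hh.1.2
      · exact hh.1.2
    -- q is not nil
    have hxv0 : x ≠ v0 := by
      cases q with
      | nil => simp at hl
      | @cons _ y1 _ hadj1 q' =>
        intro hxe
        have := (Walk.cons_isPath_iff hadj1 q').mp hp
        exact this.2 (hxe ▸ q'.end_mem_support)
    have hxR : x ∉ R := by
      intro hxR
      cases q with
      | nil => simp at hl
      | @cons _ y1 _ hadj1 q' =>
        exact havoid s(x, y1) (by simp [Walk.edges_cons]) x hxR (Sym2.mem_mk_left _ _)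
    have hv0R : v0 ∉ R := by
      intro hv0R
      obtain ⟨f, hfe, hv0f, _⟩ :=
        exists_Dp_edge q ha v0 q.end_mem_support (Ne.symm hxv0)
      exact havoid f hfe v0 hv0R hv0f
    have hxfreeM : IsFree M x := by
      intro f hf hxf
      by_cases hfR : ∀ v ∈ R, v ∉ f
      · exact hxfree f ⟨hf, hfR⟩ hxf
      · push_neg at hfR
        obtain ⟨u, huR, huf⟩ := hfR
        exact hxR (hcR f hf u huR huf x hxf)
    have hv0freeM : IsFree M v0 := by
      intro f hf hv0f
      by_cases hfR : ∀ v ∈ R, v ∉ f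
      · exact hfreev0 f ⟨hf, hfR⟩ hv0f
      · push_neg at hfR
        obtain ⟨u, huR, huf⟩ := hfR
        exact hv0R (hcR f hf u huR huf v0 hv0f)
    have hDW : ∀ e ∈ N \ N', e ∈ M := fun e he => he.1.1
    have hD'W : ∀ e ∈ N' \ N, e ∉ M := fun e he hm => he.2 ⟨hm, he.1.2⟩
    have hchain : List.Chain' (fun e₁ e₂ => (e₁ ∈ M ↔ e₂ ∉ M)) q.edges :=
      altL_chain hDW hD'W q.edges q.length haL
    have hhead : ∀ e, q.edges.head? = some e → e ∉ M := by
      intro e he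
      cases q with
      | nil => simp at he
      | @cons _ y1 _ hadj1 q' =>
        rw [Walk.edges_cons, List.head?_cons, Option.some_inj] at he
        subst he
        obtain ⟨h1, _⟩ := (altP_cons hadj1 q').mp ha
        have : s(x, y1) ∈ N' \ N := by
          rwa [show hSet N N' (q'.length + 1) = hSet N N' (Walk.cons hadj1 q').length by
            rw [Walk.length_cons], hSet_odd hodd] at h1
        exact hD'W _ this
    have hlast : ∀ e, q.edges.getLast? = some e → e ∉ M := by
      intro e he
      exact hD'W _ (altL_getLast q.edges q.length haL q.length_edges e he)
    have haug : IsAugPath M q := ⟨⟨hp, hchain⟩, hxfreeM, hv0freeM, hxv0, hhead, hlast⟩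
    have hlen : (2 : ℝ) / ε ≤ (q.length : ℝ) := not_lt.mp (h x v0 q haug)
    obtain ⟨hcN, hcN'⟩ := altL_count q.edges q.length hp.edges_nodup haL q.length_edges
    set k := q.length / 2 with hkdef
    have hkodd : q.length = 2 * k + 1 := by
      obtain ⟨t, ht⟩ := Nat.not_even_iff_odd.mp hodd
      omega
    have hK : ({e | e ∈ q.edges ∧ e ∈ N} : Set (Sym2 V)).ncard = k := by omega
    have hK' : ({e | e ∈ q.edges ∧ e ∈ N'} : Set (Sym2 V)).ncard = k + 1 := by omega
    have hcpN := cp_N hNm hN'm ⟨hp, ha, hl, hfreev0, hmax⟩ hxfree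
    have hcpN' := cp_N' hNm hN'm ⟨hp, ha, hl, hfreev0, hmax⟩ hodd
    set R₂ : Set V := R ∪ {v | v ∈ q.support} with hR₂
    have hcR₂ : Closed M R₂ := by
      intro f hf v hv hvf w hwf
      rcases hv with hvR | hvS
      · exact Or.inl (hcR f hf v hvR hvf w hwf)
      · by_cases hfR : ∀ u ∈ R, u ∉ f
        · have hfe : f ∈ q.edges := hcpN f ⟨hf, hfR⟩ v hvS hvf
          exact Or.inr (mem_support_of_edge hfe hwf)
        · push_neg at hfR
          obtain ⟨u, huR, huf⟩ := hfR
          exact Or.inl (hcR f hf u huR huf w hwf)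
    have hcR₂' : Closed M' R₂ := by
      intro f hf v hv hvf w hwf
      rcases hv with hvR | hvS
      · exact Or.inl (hcR' f hf v hvR hvf w hwf)
      · by_cases hfR : ∀ u ∈ R, u ∉ f
        · have hfe : f ∈ q.edges := hcpN' f ⟨hf, hfR⟩ v hvS hvf
          exact Or.inr (mem_support_of_edge hfe hwf)
        · push_neg at hfR
          obtain ⟨u, huR, huf⟩ := hfR
          exact Or.inl (hcR' f hf u huR huf w hwf)
    have hoffM : off M R₂ = N \ {e | e ∈ q.edges ∧ e ∈ N} := by
      ext e
      constructor
      · rintro ⟨heM, hav⟩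
        have heN : e ∈ N := ⟨heM, fun v hv => hav v (Or.inl hv)⟩
        refine ⟨heN, ?_⟩
        rintro ⟨hee, -⟩
        induction e using Sym2.ind with
        | _ p r =>
          exact hav p (Or.inr (mem_support_of_edge hee (Sym2.mem_mk_left _ _)))
            (Sym2.mem_mk_left _ _)
      · rintro ⟨heN, hne⟩
        refine ⟨heN.1, ?_⟩
        intro v hv hve
        rcases hv with hvR | hvS
        · exact heN.2 v hvR hve
        · exact hne ⟨hcpN e heN v hvS hve, heN⟩
    have hoffM' : off M' R₂ = N' \ {e | e ∈ q.edges ∧ e ∈ N'} := by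
      ext e
      constructor
      · rintro ⟨heM, hav⟩
        have heN : e ∈ N' := ⟨heM, fun v hv => hav v (Or.inl hv)⟩
        refine ⟨heN, ?_⟩
        rintro ⟨hee, -⟩
        induction e using Sym2.ind with
        | _ p r =>
          exact hav p (Or.inr (mem_support_of_edge hee (Sym2.mem_mk_left _ _)))
            (Sym2.mem_mk_left _ _)
      · rintro ⟨heN, hne⟩
        refine ⟨heN.1, ?_⟩
        intro v hv hve
        rcases hv with hvR | hvS
        · exact heN.2 v hvR hve
        · exact hne ⟨hcpN' e heN v hvS hve, heN⟩
    have hKsub : {e | e ∈ q.edges ∧ e ∈ N} ⊆ N := fun e he => he.2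
    have hK'sub : {e | e ∈ q.edges ∧ e ∈ N'} ⊆ N' := fun e he => he.2
    have hNcard : (off M R₂).ncard = N.ncard - k := by
      rw [hoffM, Set.ncard_diff hKsub, hK]
    have hN'card : (off M' R₂).ncard = N'.ncard - (k + 1) := by
      rw [hoffM', Set.ncard_diff hK'sub, hK']
    have hkN : k ≤ N.ncard := hK ▸ Set.ncard_le_ncard hKsub (Set.toFinite _)
    have hk1N' : k + 1 ≤ N'.ncard := hK' ▸ Set.ncard_le_ncard hK'sub (Set.toFinite _)
    have hlt : N'.ncard - (k + 1) < n := by omega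
    obtain ⟨d, hd1, hd2⟩ := ih (N'.ncard - (k + 1)) hlt R₂ hcR₂ hcR₂' hN'card
    rw [hNcard, hN'card] at hd1
    rw [hNcard] at hd2
    refine ⟨d + 1, ?_, ?_⟩
    · omega
    · have hcast : ((N.ncard - k : ℕ) : ℝ) = (N.ncard : ℝ) - (k : ℝ) := by
        push_cast [Nat.cast_sub hkN]; ring
      rw [hcast] at hd2
      have hql : (q.length : ℝ) = 2 * (k : ℝ) + 1 := by
        rw [hkodd]; push_cast; ring
      have hexp : ((d : ℝ) + 1) * (2 / ε - 1) = (d : ℝ) * (2 / ε - 1) + (2 / ε - 1) := by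
        ring
      push_cast
      rw [hexp]
      rw [hql] at hlen
      linarith
  · refine ⟨0, ?_, ?_⟩
    · have := no_aug_le hNm hN'm hex
      omega
    · simp only [Nat.cast_zero, zero_mul]
      positivity

end HK7


/-- Hopcroft–Karp bound: if a matching `M` admits no augmenting path of length
less than `2/ε`, then `|M| ≥ (1-ε)·μ(G)`. -/
theorem stmt0 (G : SimpleGraph V) (M : Set (Sym2 V)) (hM : IsMatching G M)
    (ε : ℝ) (hε : 0 < ε)
    (h : ∀ (a b : V) (p : G.Walk a b), IsAugPath M p → ¬ ((p.length : ℝ) < 2 / ε)) :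
    (1 - ε) * (matchNum G : ℝ) ≤ (M.ncard : ℝ) := by
  classical
  by_cases hε1 : ε < 1
  · -- find a maximum matching
    have hne : 0 ∈ {n | ∃ M₀ : Set (Sym2 V), IsMatching G M₀ ∧ M₀.ncard = n} :=
      ⟨∅, ⟨Set.empty_subset _, fun v e1 he1 => absurd he1 (Set.notMem_empty _)⟩,
        Set.ncard_empty _⟩
    have hbdd : BddAbove {n | ∃ M₀ : Set (Sym2 V), IsMatching G M₀ ∧ M₀.ncard = n} := by
      refine ⟨Nat.card (Sym2 V), ?_⟩
      rintro n ⟨M₀, _, rfl⟩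
      calc M₀.ncard ≤ (Set.univ : Set (Sym2 V)).ncard :=
            Set.ncard_le_ncard (Set.subset_univ _) Set.finite_univ
        _ = Nat.card (Sym2 V) := Set.ncard_univ _
    obtain ⟨M₀, hM₀, hM₀card⟩ := Nat.sSup_mem ⟨0, hne⟩ hbdd
    have hoff0 : ∀ S : Set (Sym2 V), HK6.off S (∅ : Set V) = S := by
      intro S; ext e; simp [HK6.off]
    have hclosed : ∀ S : Set (Sym2 V), HK6.Closed S (∅ : Set V) := by
      intro S e he v hv; exact absurd hv (Set.notMem_empty _)
    obtain ⟨d, hd1, hd2⟩ :=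
      HK7.outer hM hM₀ hε h ((HK6.off M₀ (∅ : Set V)).ncard) ∅ (hclosed M) (hclosed M₀) rfl
    rw [hoff0, hoff0] at hd1
    rw [hoff0] at hd2
    have hμ : (matchNum G : ℝ) = (M₀.ncard : ℝ) := by
      rw [hM₀card]; rfl
    have hA : (M₀.ncard : ℝ) ≤ (M.ncard : ℝ) + (d : ℝ) := by exact_mod_cast hd1
    have hεne : ε ≠ 0 := ne_of_gt hε
    have hB2 : (d : ℝ) * (2 - ε) ≤ 2 * (M.ncard : ℝ) * ε := by
      have h1 := mul_le_mul_of_nonneg_right hd2 hε.le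
      have h2 : (d : ℝ) * (2 / ε - 1) * ε = (d : ℝ) * (2 - ε) := by
        field_simp
      rw [h2] at h1
      linarith
    have hd0 : (0 : ℝ) ≤ (d : ℝ) := Nat.cast_nonneg _
    have hstep : (1 - ε) * (d : ℝ) ≤ ε * (M.ncard : ℝ) := by
      nlinarith [mul_nonneg hd0 hε.le]
    have h1ε : (0 : ℝ) ≤ 1 - ε := by linarith
    have hchain := mul_le_mul_of_nonneg_left hA h1ε
    have hexp : (1 - ε) * ((M.ncard : ℝ) + (d : ℝ))
        = (1 - ε) * (M.ncard : ℝ) + (1 - ε) * (d : ℝ) := by ring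
    have hsum : (1 - ε) * (M.ncard : ℝ) + ε * (M.ncard : ℝ) = (M.ncard : ℝ) := by ring
    rw [hμ]
    linarith
  · have hμ0 : (0 : ℝ) ≤ (matchNum G : ℝ) := Nat.cast_nonneg _
    have hM0 : (0 : ℝ) ≤ (M.ncard : ℝ) := Nat.cast_nonneg _
    nlinarith [mul_nonneg (by linarith : (0 : ℝ) ≤ ε - 1) hμ0]
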